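/- Let ε, μ, c > 0 satisfy εμc² = 1. Let A : ℝ × ℝ³ → ℝ³ and φ : ℝ × ℝ³ → ℝ be smooth fields satisfying the Lorenz gauge condition div A + c⁻² ∂_t φ = 0. Set E := −∇φ − ∂_t A, B := curl A, H := μ⁻¹ B, D := ε E, and suppose the Maxwell–Ampère equation curl H − ∂_t D = J holds for a vector field J : ℝ × ℝ³ → ℝ³. Then each component of A satisfies the inhomogeneous wave equation: Δ A_j − c⁻² ∂_t² A_j = −μ J_j for j = 1,2,3. (The equation □A = μJ of the paper's Theorem on the Maxwell–Ampère law, in vector-calculus form.) -/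

import Mathlib

open scoped BigOperators

noncomputable section

/-- Points of space-time: time paired with a spatial point. -/
abbrev SpaceTime : Type := ℝ × (Fin 3 → ℝ)

/-- Spatial partial derivative in coordinate direction `j`. -/
def pd (j : Fin 3) (f : (Fin 3 → ℝ) → ℝ) (x : Fin 3 → ℝ) : ℝ :=
  fderiv ℝ f x (Pi.single j 1)

/-- Spatial divergence of a time-dependent vector field. -/
def div3 (F : SpaceTime → (Fin 3 → ℝ)) (t : ℝ) (x : Fin 3 → ℝ) : ℝ :=
  ∑ j : Fin 3, pd j (fun y => F (t, y) j) x

/-- `j`-th component of the spatial curl of a time-dependent vector field. -/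
def curl3 (F : SpaceTime → (Fin 3 → ℝ)) (t : ℝ) (x : Fin 3 → ℝ) (j : Fin 3) : ℝ :=
  pd (j + 1) (fun y => F (t, y) (j + 2)) x - pd (j + 2) (fun y => F (t, y) (j + 1)) x

/-- `j`-th component of the spatial gradient of a time-dependent scalar field. -/
def grad3 (f : SpaceTime → ℝ) (t : ℝ) (x : Fin 3 → ℝ) (j : Fin 3) : ℝ :=
  pd j (fun y => f (t, y)) x

/-- Time derivative of a time-dependent scalar field. -/
def dt1 (f : SpaceTime → ℝ) (t : ℝ) (x : Fin 3 → ℝ) : ℝ :=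
  deriv (fun s => f (s, x)) t

/-- Second time derivative of a time-dependent scalar field. -/
def dt2 (f : SpaceTime → ℝ) (t : ℝ) (x : Fin 3 → ℝ) : ℝ :=
  deriv (fun s => dt1 f s x) t

/-- Spatial Laplacian of a time-dependent scalar field. -/
def lap3 (f : SpaceTime → ℝ) (t : ℝ) (x : Fin 3 → ℝ) : ℝ :=
  ∑ j : Fin 3, pd j (fun y => pd j (fun z => f (t, z)) y) x

namespace WaveAux

def ee (k : Fin 3) : SpaceTime := ((0:ℝ), Pi.single k 1)
def tv : SpaceTime := ((1:ℝ), 0)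

def Dw (g : SpaceTime → ℝ) (v : SpaceTime) : SpaceTime → ℝ := fun p => fderiv ℝ g p v

lemma contDiff_Dw {g : SpaceTime → ℝ} (hg : ContDiff ℝ (⊤ : ℕ∞) g) (v : SpaceTime) :
    ContDiff ℝ (⊤ : ℕ∞) (Dw g v) :=
  (hg.fderiv_right (by exact_mod_cast le_top)).clm_apply contDiff_const

lemma diff_Dw {g : SpaceTime → ℝ} (hg : ContDiff ℝ (⊤ : ℕ∞) g) (v : SpaceTime) :
    Differentiable ℝ (Dw g v) :=
  (contDiff_Dw hg v).differentiable (by simp)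

lemma pd_eq {g : SpaceTime → ℝ} (hg : Differentiable ℝ g) (t : ℝ) (x : Fin 3 → ℝ) (j : Fin 3) :
    pd j (fun y => g (t, y)) x = fderiv ℝ g (t, x) (ee j) := by
  have h1 : HasFDerivAt (fun y : Fin 3 → ℝ => ((t, y) : SpaceTime))
      (ContinuousLinearMap.inr ℝ ℝ (Fin 3 → ℝ)) x := hasFDerivAt_prodMk_right t x
  have h2 : HasFDerivAt (fun y => g (t, y))
      ((fderiv ℝ g (t, x)).comp (ContinuousLinearMap.inr ℝ ℝ (Fin 3 → ℝ))) x :=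
    (hg (t, x)).hasFDerivAt.comp x h1
  rw [pd, h2.fderiv]
  rfl

lemma dt1_eq {g : SpaceTime → ℝ} (hg : Differentiable ℝ g) (t : ℝ) (x : Fin 3 → ℝ) :
    dt1 g t x = fderiv ℝ g (t, x) tv := by
  have h1 : HasDerivAt (fun s : ℝ => ((s, x) : SpaceTime)) tv t :=
    (hasDerivAt_id t).prodMk (hasDerivAt_const t x)
  have h2 : HasDerivAt (fun s => g (s, x)) (fderiv ℝ g (t, x) tv) t :=
    (hg (t, x)).hasFDerivAt.comp_hasDerivAt t h1
  rw [dt1, h2.deriv]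

lemma symm2 {g : SpaceTime → ℝ} (hg : ContDiff ℝ (⊤ : ℕ∞) g) (p v w : SpaceTime) :
    fderiv ℝ (Dw g v) p w = fderiv ℝ (Dw g w) p v := by
  have hdg : ∀ q, HasFDerivAt g (fderiv ℝ g q) q :=
    fun q => (hg.differentiable (by simp) q).hasFDerivAt
  have hdf : ContDiff ℝ (⊤ : ℕ∞) (fderiv ℝ g) := hg.fderiv_right (by exact_mod_cast le_top)
  have hdd : HasFDerivAt (fderiv ℝ g) (fderiv ℝ (fderiv ℝ g) p) p :=
    (hdf.differentiable (by simp) p).hasFDerivAt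
  have h1 : HasFDerivAt (Dw g v)
      ((ContinuousLinearMap.apply ℝ ℝ v).comp (fderiv ℝ (fderiv ℝ g) p)) p :=
    (ContinuousLinearMap.apply ℝ ℝ v).hasFDerivAt.comp p hdd
  have h2 : HasFDerivAt (Dw g w)
      ((ContinuousLinearMap.apply ℝ ℝ w).comp (fderiv ℝ (fderiv ℝ g) p)) p :=
    (ContinuousLinearMap.apply ℝ ℝ w).hasFDerivAt.comp p hdd
  rw [h1.fderiv, h2.fderiv]
  simp only [ContinuousLinearMap.comp_apply, ContinuousLinearMap.apply_apply]
  exact second_derivative_symmetric hdg hdd w v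

lemma fderiv_comb {g1 g2 : SpaceTime → ℝ} (h1 : Differentiable ℝ g1)
    (h2 : Differentiable ℝ g2) (a b : ℝ) (p v : SpaceTime) :
    fderiv ℝ (fun q => a * g1 q + b * g2 q) p v
      = a * fderiv ℝ g1 p v + b * fderiv ℝ g2 p v := by
  have h := ((h1 p).hasFDerivAt.const_mul a).fun_add ((h2 p).hasFDerivAt.const_mul b)
  rw [h.fderiv]
  simp

lemma pd_comb {g1 g2 : SpaceTime → ℝ} (h1 : Differentiable ℝ g1)
    (h2 : Differentiable ℝ g2) (a b : ℝ) (t : ℝ) (x : Fin 3 → ℝ) (m : Fin 3) :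
    pd m (fun y => a * g1 (t, y) + b * g2 (t, y)) x
      = a * fderiv ℝ g1 (t, x) (ee m) + b * fderiv ℝ g2 (t, x) (ee m) := by
  have hp : HasFDerivAt (fun y : Fin 3 → ℝ => ((t, y) : SpaceTime))
      (ContinuousLinearMap.inr ℝ ℝ (Fin 3 → ℝ)) x := hasFDerivAt_prodMk_right t x
  have k1 : HasFDerivAt (fun y => g1 (t, y))
      ((fderiv ℝ g1 (t, x)).comp (ContinuousLinearMap.inr ℝ ℝ (Fin 3 → ℝ))) x :=
    (h1 (t, x)).hasFDerivAt.comp x hp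
  have k2 : HasFDerivAt (fun y => g2 (t, y))
      ((fderiv ℝ g2 (t, x)).comp (ContinuousLinearMap.inr ℝ ℝ (Fin 3 → ℝ))) x :=
    (h2 (t, x)).hasFDerivAt.comp x hp
  have k := (k1.const_mul a).fun_add (k2.const_mul b)
  rw [pd, k.fderiv]
  simp [ee]

lemma dt1_comb {g1 g2 : SpaceTime → ℝ} (h1 : Differentiable ℝ g1)
    (h2 : Differentiable ℝ g2) (a b : ℝ) (t : ℝ) (x : Fin 3 → ℝ) :
    dt1 (fun p => a * g1 p + b * g2 p) t x
      = a * fderiv ℝ g1 (t, x) tv + b * fderiv ℝ g2 (t, x) tv := by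
  rw [dt1_eq ((h1.const_mul a).fun_add (h2.const_mul b)) t x, fderiv_comb h1 h2 a b]

lemma fin3_sum (f : Fin 3 → ℝ) (j : Fin 3) : ∑ k, f k = f j + f (j + 1) + f (j + 2) := by
  fin_cases j <;> simp [Fin.sum_univ_three] <;> ring

lemma fin3_a (j : Fin 3) : j + 2 + 1 = j := by fin_cases j <;> rfl
lemma fin3_b (j : Fin 3) : j + 2 + 2 = j + 1 := by fin_cases j <;> rfl
lemma fin3_c (j : Fin 3) : j + 1 + 1 = j + 2 := by fin_cases j <;> rfl
lemma fin3_d (j : Fin 3) : j + 1 + 2 = j := by fin_cases j <;> rfl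

end WaveAux

open WaveAux

/-- in the Lorenz gauge, with `εμc² = 1`, the Maxwell–Ampère
equation implies the inhomogeneous wave equation `□A = μJ` componentwise. -/
theorem wave_equation_for_A
    (ε μ c : ℝ) (hε : 0 < ε) (hμ : 0 < μ) (hc : 0 < c)
    (hεμc : ε * μ * c ^ 2 = 1)
    (A : SpaceTime → (Fin 3 → ℝ)) (φ : SpaceTime → ℝ)
    (hA : ContDiff ℝ (⊤ : ℕ∞) A) (hφ : ContDiff ℝ (⊤ : ℕ∞) φ)
    (hgauge : ∀ (t : ℝ) (x : Fin 3 → ℝ),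
      div3 A t x + c⁻¹ ^ 2 * dt1 φ t x = 0)
    (E B H D : SpaceTime → (Fin 3 → ℝ))
    (hE : ∀ (t : ℝ) (x : Fin 3 → ℝ) (j : Fin 3),
      E (t, x) j = -grad3 φ t x j - dt1 (fun p => A p j) t x)
    (hB : ∀ (t : ℝ) (x : Fin 3 → ℝ) (j : Fin 3), B (t, x) j = curl3 A t x j)
    (hH : ∀ (p : SpaceTime) (j : Fin 3), H p j = μ⁻¹ * B p j)
    (hD : ∀ (p : SpaceTime) (j : Fin 3), D p j = ε * E p j)
    (J : SpaceTime → (Fin 3 → ℝ))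
    (hAmpere : ∀ (t : ℝ) (x : Fin 3 → ℝ) (j : Fin 3),
      curl3 H t x j - dt1 (fun p => D p j) t x = J (t, x) j) :
    ∀ (t : ℝ) (x : Fin 3 → ℝ) (j : Fin 3),
      lap3 (fun p => A p j) t x - c⁻¹ ^ 2 * dt2 (fun p => A p j) t x
        = -(μ * J (t, x) j) := by
  intro t x j
  have hAk : ∀ k : Fin 3, ContDiff ℝ (⊤ : ℕ∞) (fun p => A p k) := fun k =>
    (ContinuousLinearMap.proj (R := ℝ) (φ := fun _ : Fin 3 => ℝ) k).contDiff.comp hA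
  have hAd : ∀ k : Fin 3, Differentiable ℝ (fun p => A p k) := fun k =>
    (hAk k).differentiable (by simp)
  have hφd : Differentiable ℝ φ := hφ.differentiable (by simp)
  -- Laplacian in terms of second derivatives
  have hlap : lap3 (fun p => A p j) t x
      = ∑ k : Fin 3, fderiv ℝ (Dw (fun p => A p j) (ee k)) (t, x) (ee k) := by
    simp only [lap3]
    refine Finset.sum_congr rfl fun k _ => ?_
    have hfun : (fun y => pd k (fun z => A (t, z) j) y)
        = fun y => Dw (fun p => A p j) (ee k) (t, y) := by
      funext y
      exact pd_eq (hAd j) t y k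
    rw [hfun, pd_eq (diff_Dw (hAk j) (ee k)) t x k]
  -- second time derivative
  have hdt2 : dt2 (fun p => A p j) t x = fderiv ℝ (Dw (fun p => A p j) tv) (t, x) tv := by
    have hfun : (fun s => dt1 (fun p => A p j) s x)
        = fun s => Dw (fun p => A p j) tv (s, x) := by
      funext s
      exact dt1_eq (hAd j) s x
    rw [dt2, hfun]
    exact dt1_eq (diff_Dw (hAk j) tv) t x
  -- curl of H
  have hf1 : (fun y => H (t, y) (j + 2))
      = fun y => μ⁻¹ * Dw (fun p => A p (j + 1)) (ee j) (t, y)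
          + (-μ⁻¹) * Dw (fun p => A p j) (ee (j + 1)) (t, y) := by
    funext y
    rw [hH, hB]
    simp only [curl3, fin3_a j, fin3_b j]
    rw [pd_eq (hAd (j + 1)) t y j, pd_eq (hAd j) t y (j + 1)]
    simp only [Dw]
    ring
  have hf2 : (fun y => H (t, y) (j + 1))
      = fun y => μ⁻¹ * Dw (fun p => A p j) (ee (j + 2)) (t, y)
          + (-μ⁻¹) * Dw (fun p => A p (j + 2)) (ee j) (t, y) := by
    funext y
    rw [hH, hB]
    simp only [curl3, fin3_c j, fin3_d j]
    rw [pd_eq (hAd j) t y (j + 2), pd_eq (hAd (j + 2)) t y j]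
    simp only [Dw]
    ring
  have hcurlH : curl3 H t x j
      = (μ⁻¹ * fderiv ℝ (Dw (fun p => A p (j + 1)) (ee j)) (t, x) (ee (j + 1))
          + (-μ⁻¹) * fderiv ℝ (Dw (fun p => A p j) (ee (j + 1))) (t, x) (ee (j + 1)))
        - (μ⁻¹ * fderiv ℝ (Dw (fun p => A p j) (ee (j + 2))) (t, x) (ee (j + 2))
          + (-μ⁻¹) * fderiv ℝ (Dw (fun p => A p (j + 2)) (ee j)) (t, x) (ee (j + 2))) := by
    simp only [curl3]
    rw [hf1, hf2,
      pd_comb (diff_Dw (hAk (j + 1)) (ee j)) (diff_Dw (hAk j) (ee (j + 1))) μ⁻¹ (-μ⁻¹) t x (j + 1),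
      pd_comb (diff_Dw (hAk j) (ee (j + 2))) (diff_Dw (hAk (j + 2)) (ee j)) μ⁻¹ (-μ⁻¹) t x (j + 2)]
  -- time derivative of D
  have hfD : (fun p : SpaceTime => D p j)
      = fun p => (-ε) * Dw φ (ee j) p + (-ε) * Dw (fun q => A q j) tv p := by
    funext p
    obtain ⟨s, y⟩ := p
    rw [hD, hE]
    simp only [grad3]
    rw [pd_eq hφd s y j, dt1_eq (hAd j) s y]
    simp only [Dw]
    ring
  have hdtD : dt1 (fun p : SpaceTime => D p j) t x
      = (-ε) * fderiv ℝ (Dw φ (ee j)) (t, x) tv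
        + (-ε) * fderiv ℝ (Dw (fun q => A q j) tv) (t, x) tv := by
    rw [hfD]
    exact dt1_comb (diff_Dw hφ (ee j)) (diff_Dw (hAk j) tv) (-ε) (-ε) t x
  -- differentiated Lorenz gauge condition
  have hgrel : (∑ k : Fin 3, fderiv ℝ (Dw (fun q => A q k) (ee k)) (t, x) (ee j))
      + c⁻¹ ^ 2 * fderiv ℝ (Dw φ tv) (t, x) (ee j) = 0 := by
    have hzero : (fun p : SpaceTime => (∑ k : Fin 3, Dw (fun q => A q k) (ee k) p)
        + c⁻¹ ^ 2 * Dw φ tv p) = fun _ => (0 : ℝ) := by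
      funext p
      obtain ⟨s, y⟩ := p
      have h1 : ∀ k : Fin 3, Dw (fun q => A q k) (ee k) (s, y)
          = pd k (fun y' => A (s, y') k) y := fun k => (pd_eq (hAd k) s y k).symm
      have h2 : Dw φ tv (s, y) = dt1 φ s y := (dt1_eq hφd s y).symm
      simp only [h1, h2]
      exact hgauge s y
    have hsum : HasFDerivAt (fun p : SpaceTime => ∑ k : Fin 3, Dw (fun q => A q k) (ee k) p)
        (∑ k : Fin 3, fderiv ℝ (Dw (fun q => A q k) (ee k)) (t, x)) (t, x) :=
      HasFDerivAt.fun_sum fun k _ => (diff_Dw (hAk k) (ee k) (t, x)).hasFDerivAt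
    have hG : HasFDerivAt (fun p : SpaceTime => (∑ k : Fin 3, Dw (fun q => A q k) (ee k) p)
        + c⁻¹ ^ 2 * Dw φ tv p)
        ((∑ k : Fin 3, fderiv ℝ (Dw (fun q => A q k) (ee k)) (t, x))
          + c⁻¹ ^ 2 • fderiv ℝ (Dw φ tv) (t, x)) (t, x) :=
      hsum.add ((diff_Dw hφ tv (t, x)).hasFDerivAt.const_mul (c⁻¹ ^ 2))
    have h0 := hG.fderiv
    rw [hzero, fderiv_const_apply] at h0
    have happ := congrArg (fun L : SpaceTime →L[ℝ] ℝ => L (ee j)) h0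
    simp only [ContinuousLinearMap.zero_apply, ContinuousLinearMap.add_apply,
      ContinuousLinearMap.sum_apply, ContinuousLinearMap.coe_smul', Pi.smul_apply,
      smul_eq_mul] at happ
    linarith [happ]
  -- constants
  have hμ0 : μ * μ⁻¹ = 1 := mul_inv_cancel₀ hμ.ne'
  have hεc : μ * ε = c⁻¹ ^ 2 := by
    rw [inv_pow]
    exact eq_inv_of_mul_eq_one_right (by linear_combination hεμc)
  -- assemble
  rw [← hAmpere t x j, hcurlH, hdtD, hlap, hdt2]
  rw [fin3_sum (fun k => fderiv ℝ (Dw (fun p => A p j) (ee k)) (t, x) (ee k)) j]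
  rw [fin3_sum (fun k => fderiv ℝ (Dw (fun q => A q k) (ee k)) (t, x) (ee j)) j] at hgrel
  have hs1 := symm2 (hAk (j + 1)) (t, x) (ee j) (ee (j + 1))
  have hs2 := symm2 (hAk (j + 2)) (t, x) (ee j) (ee (j + 2))
  have hs3 := symm2 hφ (t, x) (ee j) tv
  linear_combination hgrel + hs1 + hs2 + c⁻¹ ^ 2 * hs3
    + (fderiv ℝ (Dw (fun p => A p (j + 1)) (ee j)) (t, x) (ee (j + 1))
        - fderiv ℝ (Dw (fun p => A p j) (ee (j + 1))) (t, x) (ee (j + 1))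
        - fderiv ℝ (Dw (fun p => A p j) (ee (j + 2))) (t, x) (ee (j + 2))
        + fderiv ℝ (Dw (fun p => A p (j + 2)) (ee j)) (t, x) (ee (j + 2))) * hμ0
    + (fderiv ℝ (Dw φ (ee j)) (t, x) tv
        + fderiv ℝ (Dw (fun p => A p j) tv) (t, x) tv) * hεc
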